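/- The Clifford-Gegenbauer polynomials on B(1) satisfy C^α_{2t+1,μ,k}(x̱) = -2(α + 2t + 1) x̱ C^α_{2t,μ,k+1}(x̱), relating an odd-degree polynomial associated with order k to an even-degree polynomial associated with order k+1. -/

import Mathlib

open scoped BigOperators RealInnerProductSpace
open MeasureTheory

namespace CGDunkl

/-- The underlying Euclidean space `ℝ^m`. -/
abbrev V (m : ℕ) := EuclideanSpace ℝ (Fin m)

/-- The quadratic form `x ↦ -‖x‖²` on `ℝ^m`, whose Clifford algebra is `ℝ_{0,m}`
(so that `eᵢ eⱼ + eⱼ eᵢ = -2 δᵢⱼ`). -/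
noncomputable def Q (m : ℕ) : QuadraticForm ℝ (V m) :=
  - LinearMap.BilinMap.toQuadraticMap (innerₗ (V m) : LinearMap.BilinForm ℝ (V m))

/-- A (normed) model of the Clifford algebra `ℝ_{0,m}`: an `ℝ`-algebra isomorphism from
the Clifford algebra of `-‖·‖²` on `ℝ^m` to a normed algebra `A`. -/
abbrev CliffordModel (m : ℕ) (A : Type*) [NormedRing A] [NormedAlgebra ℝ A] :=
  CliffordAlgebra (Q m) ≃ₐ[ℝ] A

variable {m : ℕ} {A : Type*} [NormedRing A] [NormedAlgebra ℝ A]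

/-- The Clifford generators `e_j`. -/
noncomputable def ee (F : CliffordModel m A) (j : Fin m) : A :=
  F (CliffordAlgebra.ι (Q m) (EuclideanSpace.single j 1))

/-- The vector variable `x̱ = Σⱼ eⱼ xⱼ`. -/
noncomputable def xv (F : CliffordModel m A) (x : V m) : A :=
  F (CliffordAlgebra.ι (Q m) x)

/-- Clifford conjugation, the anti-involution with `conj eᵢ = -eᵢ`
(the composition of grade reversion and grade involution). -/
noncomputable def cconj (F : CliffordModel m A) (a : A) : A :=
  F (CliffordAlgebra.reverse (CliffordAlgebra.involute (F.symm a)))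

/-- The reflection in the hyperplane orthogonal to `α`. -/
noncomputable def reflect {m : ℕ} (α x : V m) : V m :=
  x - ((2 * ⟪α, x⟫) / ⟪α, α⟫) • α

/-- The data of a (reduced, normalized) root system `R = R₊ ∪ (-R₊)` in `ℝ^m`
together with a nonnegative `G`-invariant multiplicity function `κ`. -/
structure DunklData (m : ℕ) where
  /-- the root system -/
  R : Finset (V m)
  /-- the positive subsystem -/
  Rplus : Finset (V m)
  /-- the multiplicity function -/
  κ : V m → ℝ
  root_ne_zero : ∀ α ∈ R, α ≠ 0
  /-- normalization `⟨α, α⟩ = 2` -/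
  norm_two : ∀ α ∈ R, ⟪α, α⟫ = (2 : ℝ)
  /-- the root system is reduced -/
  reduced : ∀ α ∈ R, ∀ c : ℝ, c • α ∈ R → c = 1 ∨ c = -1
  /-- `R` is preserved by each reflection `r_α`, `α ∈ R` -/
  stable : ∀ α ∈ R, ∀ β ∈ R, reflect α β ∈ R
  /-- `R` is the union of `R₊` and `-R₊` -/
  split : ∀ α : V m, α ∈ R ↔ (α ∈ Rplus ∨ -α ∈ Rplus)
  pos_disjoint : ∀ α ∈ Rplus, -α ∉ Rplus
  /-- the multiplicity function is invariant under the reflection group -/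
  invariant : ∀ α ∈ R, ∀ β ∈ R, κ (reflect α β) = κ β
  nonneg : ∀ α ∈ R, 0 ≤ κ α

/-- `γ = Σ_{α ∈ R₊} κ_α`. -/
noncomputable def gammaK (D : DunklData m) : ℝ := ∑ α ∈ D.Rplus, D.κ α

/-- The Dunkl dimension `μ = m + 2γ`. -/
noncomputable def mu (D : DunklData m) : ℝ := m + 2 * gammaK D

/-- The Dunkl operator `T_i`, acting on functions with values in the Clifford algebra. -/
noncomputable def T (D : DunklData m) (i : Fin m) (f : V m → A) (x : V m) : A :=
  fderiv ℝ f x (EuclideanSpace.single i 1) +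
    ∑ α ∈ D.Rplus, (D.κ α * (α i) / ⟪α, x⟫) • (f x - f (reflect α x))

/-- The Dunkl Dirac operator `D_k = Σⱼ eⱼ T_j`. -/
noncomputable def Dirac (F : CliffordModel m A) (D : DunklData m) (f : V m → A) (x : V m) : A :=
  ∑ j : Fin m, ee F j * T D j f x

/-- The Dunkl Laplacian `Δ_k = Σᵢ Tᵢ²`. -/
noncomputable def Lap (D : DunklData m) (f : V m → A) (x : V m) : A :=
  ∑ i : Fin m, T D i (T D i f) x

/-- The Euler operator `𝔼 = Σᵢ xᵢ ∂_{xᵢ}`. -/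
noncomputable def Euler (f : V m → A) (x : V m) : A := fderiv ℝ f x x

/-- The angular Dunkl Dirac operator (Gamma operator) `Γ_k = D_k x̱ + μ + 𝔼`. -/
noncomputable def Gam (F : CliffordModel m A) (D : DunklData m) (f : V m → A) (x : V m) : A :=
  Dirac F D (fun y => xv F y * f y) x + mu D • f x + Euler f x

/-- The regular set: the complement of the hyperplane arrangement, where the pointwise
formula for the Dunkl operators is valid. -/
def Reg (D : DunklData m) : Set (V m) := {x | ∀ α ∈ D.Rplus, ⟪α, x⟫ ≠ 0}

/-- Left solid inner Dunkl monogenic of order `k`: a smooth function, homogeneous (as a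
polynomial) of degree `k`, with `D_k M = 0`. -/
def IsInner (F : CliffordModel m A) (D : DunklData m) (k : ℕ) (M : V m → A) : Prop :=
  ContDiff ℝ ⊤ M ∧ (∀ (c : ℝ) (x : V m), M (c • x) = c ^ k • M x) ∧
    ∀ x ∈ Reg D, Dirac F D M x = 0

/-- Left solid outer Dunkl monogenic of order `k`: left Dunkl monogenic on `ℝ^m ∖ {0}` and
homogeneous of degree `-(k + μ - 1)`. -/
def IsOuter (F : CliffordModel m A) (D : DunklData m) (k : ℕ) (Qf : V m → A) : Prop :=
  ContDiffOn ℝ ⊤ Qf {x | x ≠ 0} ∧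
    (∀ c : ℝ, 0 < c → ∀ x : V m, x ≠ 0 →
      Qf (c • x) = ((c : ℝ) ^ (-((k : ℝ) + mu D - 1)) : ℝ) • Qf x) ∧
    ∀ x ∈ Reg D, x ≠ 0 → Dirac F D Qf x = 0

/-- The weight function `w_k(x) = Π_{α ∈ R₊} |⟨x, α⟩|^{2 κ_α}`. -/
noncomputable def w (D : DunklData m) (x : V m) : ℝ :=
  ∏ α ∈ D.Rplus, |⟪x, α⟫| ^ (2 * D.κ α)


variable {m : ℕ} {A : Type*} [NormedRing A] [NormedAlgebra ℝ A]

/-- The operator `D_α = (1-|x̱|²) D_k - 2(α+1) x̱` on the unit ball. -/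
noncomputable def Dal (F : CliffordModel m A) (D : DunklData m) (a : ℝ)
    (f : V m → A) (x : V m) : A :=
  (1 - ‖x‖ ^ 2) • Dirac F D f x - (2 * (a + 1)) • (xv F x * f x)

/-- The Clifford-Gegenbauer polynomials on `B(1)`:
`C^α_{t,μ}(M_k) = D_α D_{α+1} ⋯ D_{α+t-1}[M_k]` (with `C^α_{0,μ}(M_k) = M_k`). -/
noncomputable def CG (F : CliffordModel m A) (D : DunklData m) :
    ℝ → ℕ → (V m → A) → (V m → A)
  | _, 0, M => M
  | a, t + 1, M => Dal F D a (CG F D (a + 1) t M)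


lemma Q_apply (x : V m) : Q m x = -⟪x, x⟫ := by
  simp [Q]

lemma xv_sq (F : CliffordModel m A) (x : V m) :
    xv F x * xv F x = (-(‖x‖^2) : ℝ) • (1 : A) := by
  have h := congrArg F (CliffordAlgebra.ι_sq_scalar (Q m) x)
  simp only [map_mul] at h
  rw [xv, h]
  rw [AlgEquiv.commutes, Q_apply, real_inner_self_eq_norm_sq, Algebra.algebraMap_eq_smul_one]

lemma xv_mul_add_swap (F : CliffordModel m A) (x y : V m) :
    xv F x * xv F y + xv F y * xv F x = (-(2*⟪x,y⟫) : ℝ) • (1 : A) := by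
  have h := congrArg F (CliffordAlgebra.ι_mul_ι_add_swap (Q := Q m) x y)
  simp only [map_add, map_mul] at h
  rw [xv, xv, h, AlgEquiv.commutes, Algebra.algebraMap_eq_smul_one]
  congr 1
  have : QuadraticMap.polar (⇑(Q m)) x y = Q m (x+y) - Q m x - Q m y := rfl
  rw [this, Q_apply, Q_apply, Q_apply, real_inner_add_add_self]
  ring

lemma xv_mul_comm (F : CliffordModel m A) (x y : V m) :
    xv F x * xv F y = -(xv F y * xv F x) + (-(2*⟪x,y⟫) : ℝ) • (1 : A) := by
  have := xv_mul_add_swap F x y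
  linear_combination (norm := noncomm_ring) this

lemma xv_add (F : CliffordModel m A) (x y : V m) : xv F (x + y) = xv F x + xv F y := by
  simp [xv, map_add]

lemma xv_smul (F : CliffordModel m A) (c : ℝ) (x : V m) : xv F (c • x) = c • xv F x := by
  simp [xv, _root_.map_smul]

lemma x_decomp (x : V m) : ∑ i, x i • EuclideanSpace.single i (1:ℝ) = x := by
  ext j
  rw [WithLp.ofLp_sum, Finset.sum_apply]
  simp [EuclideanSpace.single_apply]

lemma xv_decomp (F : CliffordModel m A) (x : V m) : xv F x = ∑ i, x i • ee F i := by
  conv_lhs => rw [← x_decomp x]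
  rw [xv]
  rw [map_sum]
  simp [ee, xv, _root_.map_smul]

noncomputable def xvL (F : CliffordModel m A) : V m →L[ℝ] A :=
  LinearMap.toContinuousLinearMap
    ((F.toAlgHom.toLinearMap).comp (CliffordAlgebra.ι (Q m)))

lemma xvL_apply (F : CliffordModel m A) (x : V m) : xvL F x = xv F x := rfl

lemma hasFDerivAt_xv (F : CliffordModel m A) (x : V m) :
    HasFDerivAt (xv F) (xvL F) x := by
  have := (xvL F).hasFDerivAt (x := x)
  convert this using 1
  funext y; rfl

lemma differentiableAt_xv (F : CliffordModel m A) (x : V m) :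
    DifferentiableAt ℝ (xv F) x := (hasFDerivAt_xv F x).differentiableAt

lemma hasFDerivAt_nsq (x : V m) :
    HasFDerivAt (fun y : V m => ‖y‖^2) ((2:ℝ) • (innerSL ℝ x : V m →L[ℝ] ℝ)) x := by
  have h := (hasFDerivAt_id x).norm_sq
  have : ((2:ℕ) • (innerSL ℝ x : V m →L[ℝ] ℝ)) = ((2:ℝ) • (innerSL ℝ x : V m →L[ℝ] ℝ)) := by
    ext v; simp
  simpa [this] using h

lemma hasFDerivAt_radial (p : Polynomial ℝ) (x : V m) :
    HasFDerivAt (fun y : V m => p.eval (‖y‖^2))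
      ((p.derivative.eval (‖x‖^2)) • ((2:ℝ) • (innerSL ℝ x : V m →L[ℝ] ℝ))) x := by
  exact HasDerivAt.comp_hasFDerivAt x (p.hasDerivAt (‖x‖^2)) (hasFDerivAt_nsq x)


section Lemmas
variable {m : ℕ} {A : Type*} [NormedRing A] [NormedAlgebra ℝ A]
variable (F : CliffordModel m A) (D : DunklData m)

lemma mem_R_of_Rplus {α : V m} (h : α ∈ D.Rplus) : α ∈ D.R :=
  (D.split α).2 (Or.inl h)

lemma inner_self_Rplus {α : V m} (h : α ∈ D.Rplus) : ⟪α, α⟫ = (2:ℝ) :=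
  D.norm_two α (mem_R_of_Rplus D h)

lemma reflect_eq {α : V m} (h2 : ⟪α, α⟫ = (2:ℝ)) (x : V m) :
    reflect α x = x - ⟪α, x⟫ • α := by
  rw [reflect, h2]
  norm_num

lemma inner_reflect_right {α : V m} (h2 : ⟪α, α⟫ = (2:ℝ)) (y x : V m) :
    ⟪y, reflect α x⟫ = ⟪reflect α y, x⟫ := by
  rw [reflect_eq h2, reflect_eq h2]
  simp only [inner_sub_left, inner_sub_right, real_inner_smul_left, real_inner_smul_right]
  rw [real_inner_comm α y, real_inner_comm y α]
  ring

lemma nsq_reflect {α : V m} (h2 : ⟪α, α⟫ = (2:ℝ)) (x : V m) :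
    ‖reflect α x‖^2 = ‖x‖^2 := by
  rw [← real_inner_self_eq_norm_sq, ← real_inner_self_eq_norm_sq, reflect_eq h2]
  simp only [inner_sub_left, inner_sub_right, real_inner_smul_left, real_inner_smul_right]
  rw [real_inner_comm x α] at *
  rw [h2]
  ring

lemma isOpen_Reg : IsOpen (Reg D) := by
  have : Reg D = ⋂ α ∈ D.Rplus, {x : V m | ⟪α, x⟫ ≠ (0:ℝ)} := by
    ext x; simp [Reg]
  rw [this]
  refine isOpen_biInter_finset (fun α _ => ?_)
  have : {x : V m | ⟪α, x⟫ ≠ (0:ℝ)} = (fun x : V m => ⟪α, x⟫) ⁻¹' {(0:ℝ)}ᶜ := rfl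
  rw [this]
  exact (continuous_const.inner continuous_id).isOpen_preimage _ (isOpen_compl_singleton)

lemma reflect_mem_Reg {α : V m} (hα : α ∈ D.Rplus) {x : V m} (hx : x ∈ Reg D) :
    reflect α x ∈ Reg D := by
  intro β hβ
  have h2 : ⟪α, α⟫ = (2:ℝ) := inner_self_Rplus D hα
  rw [inner_reflect_right h2]
  have hβR : reflect α β ∈ D.R :=
    D.stable α (mem_R_of_Rplus D hα) β (mem_R_of_Rplus D hβ)
  rcases (D.split (reflect α β)).1 hβR with h | h
  · exact hx _ h
  · have := hx _ h
    simp only [inner_neg_left] at this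
    intro hc; exact this (by rw [hc]; ring)

lemma smul_mem_Reg {c : ℝ} (hc : c ≠ 0) {x : V m} (hx : x ∈ Reg D) :
    c • x ∈ Reg D := by
  intro β hβ
  rw [real_inner_smul_right]
  exact mul_ne_zero hc (hx _ hβ)

lemma dense_Reg : Dense (Reg D) := by
  have : Reg D = ⋂ α : D.Rplus, {x : V m | ⟪(α : V m), x⟫ ≠ (0:ℝ)} := by
    ext x; simp [Reg]
  rw [this]
  refine dense_iInter_of_isOpen (fun α => ?_) (fun α => ?_)
  · have : {x : V m | ⟪(α : V m), x⟫ ≠ (0:ℝ)} = (fun x : V m => ⟪(α:V m), x⟫) ⁻¹' {(0:ℝ)}ᶜ := rfl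
    rw [this]
    exact (continuous_const.inner continuous_id).isOpen_preimage _ (isOpen_compl_singleton)
  · -- dense complement of a hyperplane
    have hα0 : (α : V m) ≠ 0 := D.root_ne_zero _ (mem_R_of_Rplus D α.2)
    intro x
    rw [mem_closure_iff_nhds]
    intro U hU
    obtain ⟨ε, hε, hball⟩ := Metric.mem_nhds_iff.1 hU
    by_cases h : ⟪(α:V m), x⟫ = 0
    · refine ⟨x + (ε / (2 * ‖(α:V m)‖)) • (α:V m), hball ?_, ?_⟩
      · rw [Metric.mem_ball, dist_eq_norm]
        have hn : (0:ℝ) < ‖(α:V m)‖ := norm_pos_iff.2 hα0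
        have h1 : ‖x + (ε / (2 * ‖(α:V m)‖)) • (α:V m) - x‖ = (ε / (2 * ‖(α:V m)‖)) * ‖(α:V m)‖ := by
          rw [add_sub_cancel_left, norm_smul]
          rw [Real.norm_eq_abs, abs_of_pos]
          positivity
        rw [h1]
        have h2 : (ε / (2 * ‖(α:V m)‖)) * ‖(α:V m)‖ = ε / 2 := by
          field_simp
        rw [h2]; linarith
      · simp only [Set.mem_setOf_eq, inner_add_right, h, zero_add, real_inner_smul_right]
        have hn : (0:ℝ) < ‖(α:V m)‖ := norm_pos_iff.2 hα0
        have : ⟪(α:V m), (α:V m)⟫ ≠ (0:ℝ) := by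
          rw [real_inner_self_eq_norm_sq]; positivity
        exact mul_ne_zero (by positivity) this
    · exact ⟨x, hball (Metric.mem_ball_self hε), h⟩

end Lemmas

section Operators
variable {m : ℕ} {A : Type*} [NormedRing A] [NormedAlgebra ℝ A]
variable (F : CliffordModel m A) (D : DunklData m)

lemma T_congr {f g : V m → A} (hfg : ∀ y ∈ Reg D, f y = g y) {x : V m} (hx : x ∈ Reg D)
    (i : Fin m) : T D i f x = T D i g x := by
  have hev : f =ᶠ[nhds x] g :=
    Filter.eventually_of_mem ((isOpen_Reg D).mem_nhds hx) hfg
  rw [T, T, hev.fderiv_eq]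
  congr 1
  refine Finset.sum_congr rfl (fun β hβ => ?_)
  rw [hfg x hx, hfg _ (reflect_mem_Reg D hβ hx)]

lemma Dirac_congr {f g : V m → A} (hfg : ∀ y ∈ Reg D, f y = g y) {x : V m} (hx : x ∈ Reg D) :
    Dirac F D f x = Dirac F D g x := by
  rw [Dirac, Dirac]
  exact Finset.sum_congr rfl (fun j _ => by rw [T_congr D hfg hx j])

lemma Dal_congr {f g : V m → A} (hfg : ∀ y ∈ Reg D, f y = g y) {x : V m} (hx : x ∈ Reg D)
    (a : ℝ) : Dal F D a f x = Dal F D a g x := by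
  rw [Dal, Dal, Dirac_congr F D hfg hx, hfg x hx]

lemma euler_of_homog {M : V m → A} {k : ℕ}
    (hh : ∀ (c : ℝ) (y : V m), M (c • y) = c ^ k • M y) (x : V m)
    (hdx : DifferentiableAt ℝ M x) :
    fderiv ℝ M x x = (k : ℝ) • M x := by
  have hsm : HasDerivAt (fun c : ℝ => c • x) x 1 := by
    simpa using (hasDerivAt_id (1:ℝ)).smul_const x
  have hM : HasFDerivAt M (fderiv ℝ M x) ((1:ℝ) • x) := by
    rw [one_smul]; exact hdx.hasFDerivAt
  have h1 : HasDerivAt (fun c : ℝ => M (c • x)) (fderiv ℝ M x x) 1 :=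
    hM.comp_hasDerivAt 1 hsm
  have h2 : HasDerivAt (fun c : ℝ => c ^ k • M x) ((k:ℝ) • M x) 1 := by
    have := (hasDerivAt_pow k (1:ℝ)).smul_const (M x)
    simpa using this
  have hfun : (fun c : ℝ => M (c • x)) = fun c : ℝ => c ^ k • M x := by
    funext c; exact hh c x
  rw [hfun] at h1
  exact h1.unique h2

lemma inner_single_real (x : V m) (i : Fin m) :
    ⟪x, EuclideanSpace.single i (1:ℝ)⟫ = x i := by
  rw [real_inner_comm]
  simpa using EuclideanSpace.inner_single_left (𝕜 := ℝ) i 1 x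

/-- Dunkl operator applied to a reflection-invariant scalar multiple. -/
lemma T_smul {φ : V m → ℝ} {φ' : V m →L[ℝ] ℝ} {x : V m} (hφ : HasFDerivAt φ φ' x)
    (hinv : ∀ α ∈ D.Rplus, φ (reflect α x) = φ x)
    {f : V m → A} (hf : DifferentiableAt ℝ f x) (i : Fin m) :
    T D i (fun y => φ y • f y) x = φ' (EuclideanSpace.single i 1) • f x + φ x • T D i f x := by
  rw [T, T]
  have hder := (hφ.smul hf.hasFDerivAt).fderiv
  rw [show (fun y => φ y • f y) = φ • f from rfl, hder]
  simp only [ContinuousLinearMap.add_apply, ContinuousLinearMap.smul_apply,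
    ContinuousLinearMap.smulRight_apply]
  have hsum : ∑ α ∈ D.Rplus, (D.κ α * (α i) / ⟪α, x⟫) •
      (φ x • f x - φ (reflect α x) • f (reflect α x))
      = φ x • ∑ α ∈ D.Rplus, (D.κ α * (α i) / ⟪α, x⟫) • (f x - f (reflect α x)) := by
    rw [Finset.smul_sum]
    refine Finset.sum_congr rfl (fun α hα => ?_)
    rw [hinv α hα, ← smul_sub, smul_comm]
  rw [hsum]
  module

/-- Dirac operator applied to a radial polynomial multiple. -/
lemma Dirac_radial (p : Polynomial ℝ) {f : V m → A} {x : V m} (hf : DifferentiableAt ℝ f x) :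
    Dirac F D (fun y => Polynomial.eval (‖y‖^2) p • f y) x
      = (2 * Polynomial.eval (‖x‖^2) (Polynomial.derivative p)) • (xv F x * f x)
        + Polynomial.eval (‖x‖^2) p • Dirac F D f x := by
  rw [Dirac]
  have hT : ∀ i : Fin m, T D i (fun y => Polynomial.eval (‖y‖^2) p • f y) x
      = (Polynomial.eval (‖x‖^2) (Polynomial.derivative p) * (2 * x i)) • f x
        + Polynomial.eval (‖x‖^2) p • T D i f x := by
    intro i
    have := T_smul D (hasFDerivAt_radial p x)
      (fun α hα => by rw [nsq_reflect (inner_self_Rplus D hα)]) hf i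
    rw [this]
    congr 2
    simp [inner_single_real]
  calc ∑ j : Fin m, ee F j * T D j (fun y => Polynomial.eval (‖y‖^2) p • f y) x
      = ∑ j : Fin m, ((Polynomial.eval (‖x‖^2) (Polynomial.derivative p) * (2 * x j)) •
          (ee F j * f x) + Polynomial.eval (‖x‖^2) p • (ee F j * T D j f x)) := by
        refine Finset.sum_congr rfl (fun j _ => ?_)
        rw [hT j, mul_add, mul_smul_comm, mul_smul_comm]
    _ = (2 * Polynomial.eval (‖x‖^2) (Polynomial.derivative p)) • ((∑ j : Fin m, x j • ee F j) * f x)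
        + Polynomial.eval (‖x‖^2) p • ∑ j : Fin m, ee F j * T D j f x := by
        rw [Finset.sum_add_distrib, ← Finset.smul_sum]
        congr 1
        rw [Finset.sum_mul, Finset.smul_sum]
        refine Finset.sum_congr rfl (fun j _ => ?_)
        rw [smul_mul_assoc, smul_smul]
        congr 1
        ring
    _ = _ := by rw [← xv_decomp, Dirac]

end Operators

section XvMul
variable {m : ℕ} {A : Type*} [NormedRing A] [NormedAlgebra ℝ A]
variable (F : CliffordModel m A) (D : DunklData m)

lemma ee_sq (i : Fin m) : ee F i * ee F i = (-1 : ℝ) • (1:A) := by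
  have := xv_sq F (EuclideanSpace.single i (1:ℝ))
  rw [show xv F (EuclideanSpace.single i (1:ℝ)) = ee F i from rfl] at this
  rw [this]
  norm_num

lemma swap_sum {x : V m} (d : V m → A) :
    ∑ i : Fin m, ee F i * (∑ α ∈ D.Rplus, (D.κ α * (α i) / ⟪α, x⟫) • d α)
      = ∑ α ∈ D.Rplus, (D.κ α / ⟪α, x⟫) • (xv F α * d α) := by
  have h1 : ∀ i : Fin m, ee F i * (∑ α ∈ D.Rplus, (D.κ α * (α i) / ⟪α, x⟫) • d α)
      = ∑ α ∈ D.Rplus, (D.κ α * (α i) / ⟪α, x⟫) • (ee F i * d α) := by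
    intro i
    rw [Finset.mul_sum]
    exact Finset.sum_congr rfl (fun α _ => (mul_smul_comm _ _ _))
  simp only [h1]
  rw [Finset.sum_comm]
  refine Finset.sum_congr rfl (fun α _ => ?_)
  have h2 : ∀ i : Fin m, (D.κ α * (α i) / ⟪α, x⟫) • (ee F i * d α)
      = (D.κ α / ⟪α, x⟫) • ((α i • ee F i) * d α) := by
    intro i
    rw [smul_mul_assoc, smul_smul]
    congr 1
    ring
  simp only [h2]
  rw [← Finset.smul_sum, ← Finset.sum_mul, ← xv_decomp]

/-- The key identity `D_k (x̱ f) = - x̱ D_k f - (μ + 2𝔼) f` specialised to Dunkl-monogenic,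
Euler-homogeneous `f`. -/
lemma Dirac_xv_mul {f : V m → A} {x : V m} (hx : x ∈ Reg D)
    (hf : DifferentiableAt ℝ f x) (hD : Dirac F D f x = 0) {κr : ℝ}
    (hE : fderiv ℝ f x x = κr • f x) :
    Dirac F D (fun y => xv F y * f y) x = (-(mu D + 2*κr)) • f x := by
  classical
  set u : Fin m → A := fun i => fderiv ℝ f x (EuclideanSpace.single i 1) with hu
  have hfder : fderiv ℝ (fun y => xv F y * f y) x
      = xv F x • (fderiv ℝ f x) + (xvL F).smulRight (f x) :=
    ((hasFDerivAt_xv F x).mul' hf.hasFDerivAt).fderiv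
  have hT : ∀ i : Fin m, T D i (fun y => xv F y * f y) x
      = (ee F i * f x + xv F x * u i) +
        ∑ α ∈ D.Rplus, (D.κ α * (α i) / ⟪α, x⟫) •
          (xv F x * f x - xv F (reflect α x) * f (reflect α x)) := by
    intro i
    rw [T, hfder]
    congr 1
    simp only [ContinuousLinearMap.add_apply, ContinuousLinearMap.smul_apply,
      ContinuousLinearMap.smulRight_apply, xvL_apply, smul_eq_mul]
    rw [show xv F (EuclideanSpace.single i (1:ℝ)) = ee F i from rfl]
    rw [add_comm]
  have key : Dirac F D (fun y => xv F y * f y) x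
      = (∑ i : Fin m, ee F i * (ee F i * f x))
        + (∑ i : Fin m, ee F i * (xv F x * u i))
        + (∑ α ∈ D.Rplus, (D.κ α / ⟪α, x⟫) •
            (xv F α * (xv F x * f x - xv F (reflect α x) * f (reflect α x)))) := by
    rw [Dirac]
    simp only [hT, mul_add]
    rw [Finset.sum_add_distrib, Finset.sum_add_distrib, swap_sum F D]
  -- S1
  have hS1 : (∑ i : Fin m, ee F i * (ee F i * f x)) = (-(m:ℝ)) • f x := by
    have : ∀ i : Fin m, ee F i * (ee F i * f x) = (-1:ℝ) • f x := by
      intro i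
      rw [← mul_assoc, ee_sq, smul_mul_assoc, one_mul]
    simp only [this]
    rw [Finset.sum_const, Finset.card_univ, Fintype.card_fin]
    rw [← Nat.cast_smul_eq_nsmul ℝ, smul_smul]
    congr 1
    ring
  -- S2
  have hanti : ∀ i : Fin m, ee F i * xv F x = -(xv F x * ee F i) + (-(2 * x i)) • (1:A) := by
    intro i
    have := xv_mul_comm F (EuclideanSpace.single i (1:ℝ)) x
    rw [show xv F (EuclideanSpace.single i (1:ℝ)) = ee F i from rfl] at this
    rw [this]
    congr 2
    simpa using EuclideanSpace.inner_single_left (𝕜 := ℝ) i 1 x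
  have hS2 : (∑ i : Fin m, ee F i * (xv F x * u i))
      = -(xv F x * ∑ i : Fin m, ee F i * u i) + (-(2*κr)) • f x := by
    have h1 : ∀ i : Fin m, ee F i * (xv F x * u i)
        = -(xv F x * (ee F i * u i)) + (-(2 * x i)) • u i := by
      intro i
      rw [← mul_assoc, hanti i, add_mul, smul_mul_assoc, one_mul, neg_mul, mul_assoc]
    simp only [h1]
    rw [Finset.sum_add_distrib]
    congr 1
    · rw [Finset.sum_neg_distrib, ← Finset.mul_sum]
    · have h2 : ∀ i : Fin m, (-(2 * x i)) • u i = (-2 : ℝ) • (x i • u i) := by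
        intro i; rw [smul_smul]; congr 1; ring
      simp only [h2]
      rw [← Finset.smul_sum]
      have h3 : ∑ i : Fin m, x i • u i = fderiv ℝ f x x := by
        have h4 : ∀ i : Fin m, x i • u i
            = fderiv ℝ f x (x i • EuclideanSpace.single i 1) := by
          intro i; rw [(fderiv ℝ f x).map_smul]
        simp only [h4]
        rw [← _root_.map_sum, x_decomp]
      rw [h3, hE, smul_smul]
      congr 1
      ring
  -- S3
  have hS3 : (∑ α ∈ D.Rplus, (D.κ α / ⟪α, x⟫) •
        (xv F α * (xv F x * f x - xv F (reflect α x) * f (reflect α x))))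
      = -(xv F x * ∑ α ∈ D.Rplus, (D.κ α / ⟪α, x⟫) •
          (xv F α * (f x - f (reflect α x)))) + (-(2 * gammaK D)) • f x := by
    have hterm : ∀ α ∈ D.Rplus, (D.κ α / ⟪α, x⟫) •
        (xv F α * (xv F x * f x - xv F (reflect α x) * f (reflect α x)))
        = -(xv F x * ((D.κ α / ⟪α, x⟫) • (xv F α * (f x - f (reflect α x)))))
          + (-(2 * D.κ α)) • f x := by
      intro α hα
      have h2 : ⟪α, α⟫ = (2:ℝ) := inner_self_Rplus D hα
      have hc : ⟪α, x⟫ ≠ (0:ℝ) := hx α hα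
      have hrx : xv F (reflect α x) = xv F x - ⟪α, x⟫ • xv F α := by
        rw [reflect_eq h2, xv, map_sub, _root_.map_sub, ← xv, ← xv_smul, ← xv]
      have hsqα : xv F α * xv F α = (-2 : ℝ) • (1:A) := by
        rw [xv_sq]
        congr 1
        rw [← real_inner_self_eq_norm_sq, h2]
      have hmc := xv_mul_comm F α x
      have h3 : xv F α * xv F (reflect α x) = -(xv F x * xv F α) := by
        rw [hrx, mul_sub, hmc, mul_smul_comm, hsqα]
        module
      have h4 : xv F α * (xv F x * f x - xv F (reflect α x) * f (reflect α x))
          = -(xv F x * (xv F α * (f x - f (reflect α x)))) + (-(2 * ⟪α, x⟫)) • f x := by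
        have e1 : xv F α * (xv F x * f x)
            = (-(xv F x * xv F α) + (-(2*⟪α,x⟫)) • (1:A)) * f x := by
          rw [← mul_assoc, hmc]
        have e2 : xv F α * (xv F (reflect α x) * f (reflect α x))
            = -(xv F x * xv F α) * f (reflect α x) := by
          rw [← mul_assoc, h3]
        rw [mul_sub, e1, e2]
        simp only [add_mul, neg_mul, smul_mul_assoc, one_mul, mul_sub, mul_assoc]
        module
      rw [h4, smul_add, smul_neg, ← mul_smul_comm, smul_smul]
      congr 2
      rw [div_mul_eq_mul_div, mul_div_assoc]
      have hdd : -(2*⟪α,x⟫)/⟪α,x⟫ = -2 := by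
        rw [neg_div, mul_div_assoc, div_self hc, mul_one]
      rw [hdd]
      ring
    have hsum := Finset.sum_congr rfl hterm
    rw [hsum, Finset.sum_add_distrib]
    congr 1
    · rw [Finset.sum_neg_distrib, ← Finset.mul_sum]
    · rw [← Finset.sum_smul]
      congr 1
      rw [Finset.sum_neg_distrib, gammaK, Finset.mul_sum]
  -- assemble
  have hdecomp : Dirac F D f x = (∑ i : Fin m, ee F i * u i)
      + ∑ α ∈ D.Rplus, (D.κ α / ⟪α, x⟫) • (xv F α * (f x - f (reflect α x))) := by
    rw [Dirac]
    have : ∀ i : Fin m, ee F i * T D i f x = ee F i * u i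
        + ee F i * (∑ α ∈ D.Rplus, (D.κ α * (α i) / ⟪α, x⟫) • (f x - f (reflect α x))) := by
      intro i
      rw [T, mul_add]
    simp only [this]
    rw [Finset.sum_add_distrib, swap_sum F D]
  rw [key, hS1, hS2, hS3]
  have hzero : (∑ i : Fin m, ee F i * u i)
      + ∑ α ∈ D.Rplus, (D.κ α / ⟪α, x⟫) • (xv F α * (f x - f (reflect α x))) = 0 := by
    rw [← hdecomp, hD]
  have hmu : mu D = (m : ℝ) + 2 * gammaK D := rfl
  calc (-(m:ℝ)) • f x + (-(xv F x * ∑ i : Fin m, ee F i * u i) + (-(2*κr)) • f x)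
        + (-(xv F x * ∑ α ∈ D.Rplus, (D.κ α / ⟪α, x⟫) •
            (xv F α * (f x - f (reflect α x)))) + (-(2 * gammaK D)) • f x)
      = -(xv F x * ((∑ i : Fin m, ee F i * u i)
          + ∑ α ∈ D.Rplus, (D.κ α / ⟪α, x⟫) • (xv F α * (f x - f (reflect α x)))))
        + ((-(m:ℝ)) + (-(2*κr)) + (-(2*gammaK D))) • f x := by
        rw [mul_add]
        module
    _ = (-(mu D + 2*κr)) • f x := by
        rw [hzero, mul_zero, neg_zero, zero_add, hmu]
        congr 1
        ring

end XvMul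

section Poly
open Polynomial

/-- Effect of `D_a` on an even radial coefficient: `b ↦ 2(1-r)b' - 2(a+1)b`. -/
noncomputable def E2O (a : ℝ) (p : ℝ[X]) : ℝ[X] :=
  2 * (1 - X) * derivative p - C (2*(a+1)) * p

/-- Effect of `D_a` on an odd radial coefficient (`K = μ + 2k`):
`B ↦ (1-r)(-2rB' - KB) + 2(a+1) r B`. -/
noncomputable def O2E (K a : ℝ) (p : ℝ[X]) : ℝ[X] :=
  (1 - X) * (-(2 * X * derivative p) - C K * p) + C (2*(a+1)) * (X * p)

noncomputable def evenP (K : ℝ) : ℝ → ℕ → ℝ[X]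
  | _, 0 => 1
  | a, s+1 => O2E K a (E2O (a+1) (evenP K (a+2) s))

noncomputable def oddP (K a : ℝ) (s : ℕ) : ℝ[X] := E2O a (evenP K (a+1) s)

lemma evenP_zero (K a : ℝ) : evenP K a 0 = 1 := rfl

lemma evenP_succ (K a : ℝ) (s : ℕ) :
    evenP K a (s+1) = O2E K a (oddP K (a+1) s) := by
  rw [oddP, show (a:ℝ)+1+1 = a+2 from by ring]
  rfl

lemma E2O_C_mul (a c : ℝ) (p : ℝ[X]) : E2O a (C c * p) = C c * E2O a p := by
  simp only [E2O, derivative_C_mul]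
  ring

lemma O2E_C_mul (K a c : ℝ) (p : ℝ[X]) : O2E K a (C c * p) = C c * O2E K a p := by
  simp only [O2E, derivative_C_mul]
  ring

/-- The commutation identity `D_a ∘ (O2E at level K) = (O2E at level K+2) ∘ D_{a+1}`. -/
lemma star_identity (K a : ℝ) (p : ℝ[X]) :
    E2O a (O2E K (a+1) p) = O2E (K+2) a (E2O (a+1) p) := by
  simp only [E2O, O2E, derivative_add, derivative_sub, derivative_mul, derivative_neg,
    derivative_C, derivative_X, derivative_one, derivative_ofNat, map_add, map_mul, map_one,
    map_ofNat]
  ring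

lemma oddP_eq (K : ℝ) (s : ℕ) : ∀ a : ℝ,
    oddP K a s = C (-(2*(a + 2*(s:ℝ) + 1))) * evenP (K+2) a s := by
  induction s with
  | zero =>
      intro a
      rw [oddP, evenP_zero, evenP_zero, E2O]
      simp only [derivative_one, mul_zero, zero_sub, mul_one]
      rw [show (-(2*(a + 2*((0:ℕ):ℝ) + 1))) = -(2*(a+1)) by push_cast; ring]
      simp [map_neg]
  | succ s ih =>
      intro a
      have h1 : oddP K a (s+1) = E2O a (O2E K (a+1) (oddP K (a+2) s)) := by
        rw [oddP, evenP_succ, show (a:ℝ)+1+1 = a+2 from by ring]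
      rw [h1, ih (a+2)]
      rw [O2E_C_mul, E2O_C_mul, star_identity]
      have h2 : E2O (a+1) (evenP (K+2) (a+2) s) = oddP (K+2) (a+1) s := by
        rw [oddP, show (a:ℝ)+1+1 = a+2 from by ring]
      rw [h2, ← evenP_succ]
      congr 2
      push_cast
      ring

end Poly

section Semantics
open Polynomial
variable {m : ℕ} {A : Type*} [NormedRing A] [NormedAlgebra ℝ A]
variable (F : CliffordModel m A) (D : DunklData m)

lemma E2O_eval (a r : ℝ) (p : ℝ[X]) :
    (E2O a p).eval r = 2*(1-r) * (derivative p).eval r - 2*(a+1) * p.eval r := by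
  simp [E2O]

lemma O2E_eval (K a r : ℝ) (p : ℝ[X]) :
    (O2E K a p).eval r
      = (1-r) * (-(2*r*(derivative p).eval r) - K * p.eval r) + 2*(a+1)*(r * p.eval r) := by
  simp [O2E]

lemma CG_formulas {M : V m → A} {k : ℕ} (hM : IsInner F D k M) (s : ℕ) :
    (∀ (a : ℝ) (x : V m), x ∈ Reg D →
      CG F D a (2*s) M x = (evenP (mu D + 2*(k:ℝ)) a s).eval (‖x‖^2) • M x) ∧
    (∀ (a : ℝ) (x : V m), x ∈ Reg D →
      CG F D a (2*s+1) M x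
        = (oddP (mu D + 2*(k:ℝ)) a s).eval (‖x‖^2) • (xv F x * M x)) := by
  obtain ⟨hsm, hh, hD0⟩ := hM
  have hdiffM : ∀ y : V m, DifferentiableAt ℝ M y :=
    fun y => (hsm.differentiable (by simp)).differentiableAt
  set K : ℝ := mu D + 2*(k:ℝ) with hK
  -- odd formula follows from even formula at the same s
  have odd_of_even : ∀ s : ℕ,
      (∀ (a : ℝ) (x : V m), x ∈ Reg D →
        CG F D a (2*s) M x = (evenP K a s).eval (‖x‖^2) • M x) →
      (∀ (a : ℝ) (x : V m), x ∈ Reg D →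
        CG F D a (2*s+1) M x = (oddP K a s).eval (‖x‖^2) • (xv F x * M x)) := by
    intro s he a x hx
    have h1 : CG F D a (2*s+1) M = Dal F D a (CG F D (a+1) (2*s) M) := rfl
    rw [h1]
    rw [Dal_congr F D (fun y hy => he (a+1) y hy) hx a]
    set p : ℝ[X] := evenP K (a+1) s with hp
    rw [Dal]
    rw [Dirac_radial F D p (hdiffM x)]
    rw [hD0 x hx, smul_zero, add_zero]
    rw [mul_smul_comm]
    rw [smul_smul, smul_smul]
    rw [← sub_smul]
    rw [oddP]
    congr 1
    rw [E2O_eval]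
    ring
  have even_succ : ∀ s : ℕ,
      (∀ (a : ℝ) (x : V m), x ∈ Reg D →
        CG F D a (2*s+1) M x = (oddP K a s).eval (‖x‖^2) • (xv F x * M x)) →
      (∀ (a : ℝ) (x : V m), x ∈ Reg D →
        CG F D a (2*(s+1)) M x = (evenP K a (s+1)).eval (‖x‖^2) • M x) := by
    intro s ho a x hx
    have h1 : CG F D a (2*(s+1)) M = Dal F D a (CG F D (a+1) (2*s+1) M) := by
      rw [show 2*(s+1) = (2*s+1)+1 from by ring]
      rfl
    rw [h1]
    rw [Dal_congr F D (fun y hy => ho (a+1) y hy) hx a]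
    set B : ℝ[X] := oddP K (a+1) s with hB
    have hfxv : DifferentiableAt ℝ (fun y => xv F y * M y) x :=
      ((hasFDerivAt_xv F x).mul' (hdiffM x).hasFDerivAt).differentiableAt
    have hE : fderiv ℝ M x x = (k:ℝ) • M x := euler_of_homog hh x (hdiffM x)
    rw [Dal]
    rw [Dirac_radial F D B hfxv]
    rw [Dirac_xv_mul F D hx (hdiffM x) (hD0 x hx) hE]
    have hxx : xv F x * (xv F x * M x) = (-(‖x‖^2) : ℝ) • M x := by
      rw [← mul_assoc, xv_sq, smul_mul_assoc, one_mul]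
    rw [hxx]
    rw [mul_smul_comm, hxx]
    rw [smul_smul, smul_smul, smul_smul, smul_smul, ← add_smul, smul_smul, ← sub_smul]
    rw [evenP_succ]
    congr 1
    rw [O2E_eval]
    rw [← hK]
    ring
  induction s with
  | zero =>
      constructor
      · intro a x hx
        have : CG F D a (2*0) M = M := rfl
        rw [this, evenP_zero]
        simp
      · refine odd_of_even 0 ?_
        intro a x hx
        have : CG F D a (2*0) M = M := rfl
        rw [this, evenP_zero]
        simp
  | succ s ih =>
      have he := even_succ s ih.2
      exact ⟨he, odd_of_even (s+1) he⟩

end Semantics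

section Final
open Polynomial
variable {m : ℕ} {A : Type*} [NormedRing A] [NormedAlgebra ℝ A]
variable (F : CliffordModel m A) (D : DunklData m)

lemma xv_pow_even (x : V m) (i : ℕ) :
    xv F x ^ (2*i) = ((-(‖x‖^2) : ℝ)^i) • (1:A) := by
  rw [pow_mul, pow_two, xv_sq, _root_.smul_pow, one_pow]

lemma xv_pow_odd (x : V m) (i : ℕ) :
    xv F x ^ (2*i+1) = ((-(‖x‖^2) : ℝ)^i) • xv F x := by
  rw [pow_succ, xv_pow_even, smul_mul_assoc, one_mul]

lemma smul_cancel {r : ℝ} {v : A} (h : r • v = 0) (hv : v ≠ 0) : r = 0 := by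
  by_contra hr
  apply hv
  have h2 := congrArg (fun w : A => r⁻¹ • w) h
  simpa [smul_smul, inv_mul_cancel₀ hr] using h2

lemma exists_good_point (hm : 0 < m) {M : V m → A} (hcont : Continuous M)
    {k : ℕ} (hh : ∀ (cc : ℝ) (y : V m), M (cc • y) = cc ^ k • M y)
    (h0 : ∃ x, M x ≠ 0) : ∃ x, x ∈ Reg D ∧ x ≠ 0 ∧ M x ≠ 0 := by
  obtain ⟨x₀, hx₀⟩ := h0
  have hexists : ∃ y : V m, y ≠ 0 ∧ M y ≠ 0 := by
    by_cases hk : k = 0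
    · subst hk
      have hconst : ∀ y : V m, M y = M x₀ := by
        intro y
        have h1 := hh 0 y
        have h2 := hh 0 x₀
        rw [zero_smul] at h1 h2
        simp only [pow_zero, one_smul] at h1 h2
        rw [← h1, h2]
      refine ⟨EuclideanSpace.single ⟨0, hm⟩ (1:ℝ), ?_, ?_⟩
      · intro hcontra
        have := congrArg (fun z : V m => z ⟨0, hm⟩) hcontra
        simp [EuclideanSpace.single_apply] at this
      · rw [hconst]; exact hx₀
    · have hx0ne : x₀ ≠ 0 := by
        intro h
        apply hx₀
        have h1 := hh 0 x₀
        rw [zero_smul, zero_pow hk, zero_smul] at h1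
        rw [h, ← h1]
      exact ⟨x₀, hx0ne, hx₀⟩
  obtain ⟨y, hy0, hMy⟩ := hexists
  have hU : IsOpen {z : V m | M z ≠ 0 ∧ z ≠ 0} := by
    have h1 : IsOpen {z : V m | M z ≠ 0} :=
      (isOpen_compl_singleton).preimage hcont
    have h2 : IsOpen {z : V m | z ≠ (0 : V m)} := isOpen_compl_singleton
    exact h1.inter h2
  obtain ⟨z, hz, hz2⟩ := (dense_Reg D).exists_mem_open hU ⟨y, hMy, hy0⟩
  exact ⟨z, hz, hz2.2, hz2.1⟩

lemma poly_vanish (q : ℝ[X]) {x₁ : V m} (hx0 : x₁ ≠ 0)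
    (hroot : ∀ cc : ℝ, cc ≠ 0 → q.eval (‖cc • x₁‖^2) = 0) : q = 0 := by
  apply Polynomial.eq_zero_of_infinite_isRoot
  refine Set.Infinite.mono ?_ (Set.Ioi_infinite (0:ℝ))
  intro sv hs
  have hn : ‖x₁‖ ≠ 0 := by
    simpa using hx0
  have hs' : (0:ℝ) < sv := hs
  have hcne : Real.sqrt sv / ‖x₁‖ ≠ 0 := by
    apply div_ne_zero _ hn
    exact ne_of_gt (Real.sqrt_pos.2 hs')
  have := hroot _ hcne
  have hval : ‖(Real.sqrt sv / ‖x₁‖) • x₁‖^2 = sv := by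
    rw [norm_smul, mul_pow, Real.norm_eq_abs, sq_abs, div_pow]
    rw [Real.sq_sqrt hs'.le]
    field_simp
  rw [hval] at this
  exact this

end Final


open Polynomial

/-- `C^α_{2t+1,μ,k}(x̱) = -2(α+2t+1) x̱ C^α_{2t,μ,k+1}(x̱)`: the odd-degree
Clifford-Gegenbauer polynomial (in `x̱`) associated with order `k` equals `-2(α+2t+1) x̱`
times the even-degree one associated with order `k+1`.  The polynomial parts are encoded by
odd (resp. even) polynomials `c` (resp. `c'`) in `x̱` with `C^α_{2t+1,μ}(M_k) = c ⬝ M_k`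
(resp. `C^α_{2t,μ}(N_{k+1}) = c' ⬝ N_{k+1}`) for nonzero monogenics `M_k`, `N_{k+1}`. -/
theorem cg_odd_eq_xv_mul_cg_even_shifted
    {m : ℕ} {A : Type*} [NormedRing A] [NormedAlgebra ℝ A]
    (F : CliffordModel m A) (D : DunklData m)
    (k : ℕ) (M N : V m → A)
    (hM : IsInner F D k M) (hN : IsInner F D (k + 1) N)
    (hM0 : ∃ x, M x ≠ 0) (hN0 : ∃ x, N x ≠ 0)
    (α : ℝ) (hα : -1 < α) (t : ℕ)
    (c c' : V m → A)
    (hc_odd : ∃ (n : ℕ) (a : ℕ → ℝ), ∀ x : V m,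
      c x = ∑ i ∈ Finset.range (n + 1), a i • xv F x ^ (2 * i + 1))
    (hc'_even : ∃ (n : ℕ) (a : ℕ → ℝ), ∀ x : V m,
      c' x = ∑ i ∈ Finset.range (n + 1), a i • xv F x ^ (2 * i))
    (hc : ∀ x ∈ Reg D, CG F D α (2 * t + 1) M x = c x * M x)
    (hc' : ∀ x ∈ Reg D, CG F D α (2 * t) N x = c' x * N x) :
    ∀ x : V m, c x = (-(2 * (α + 2 * t + 1))) • (xv F x * c' x) := by
  classical
  obtain ⟨n, aa, hcrep⟩ := hc_odd
  obtain ⟨n', aa', hc'rep⟩ := hc'_even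
  set K : ℝ := mu D + 2*(k:ℝ) with hKdef
  set pc : ℝ[X] := ∑ i ∈ Finset.range (n+1), C (aa i) * (C (-1) * X)^i with hpcdef
  set pc' : ℝ[X] := ∑ i ∈ Finset.range (n'+1), C (aa' i) * (C (-1) * X)^i with hpc'def
  have hpceval : ∀ r : ℝ, pc.eval r = ∑ i ∈ Finset.range (n+1), aa i * (-r)^i := by
    intro r
    rw [hpcdef, eval_finset_sum]
    refine Finset.sum_congr rfl (fun i _ => ?_)
    simp [eval_mul, eval_pow]
  have hpc'eval : ∀ r : ℝ, pc'.eval r = ∑ i ∈ Finset.range (n'+1), aa' i * (-r)^i := by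
    intro r
    rw [hpc'def, eval_finset_sum]
    refine Finset.sum_congr rfl (fun i _ => ?_)
    simp [eval_mul, eval_pow]
  have hpc : ∀ x : V m, c x = pc.eval (‖x‖^2) • xv F x := by
    intro x
    rw [hcrep x, hpceval]
    have h1 : ∀ i : ℕ, aa i • xv F x ^ (2*i+1)
        = (aa i * (-(‖x‖^2))^i) • xv F x := by
      intro i
      rw [xv_pow_odd, smul_smul]
    simp only [h1]
    rw [← Finset.sum_smul]
  have hpc' : ∀ x : V m, c' x = pc'.eval (‖x‖^2) • (1:A) := by
    intro x
    rw [hc'rep x, hpc'eval]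
    have h1 : ∀ i : ℕ, aa' i • xv F x ^ (2*i)
        = (aa' i * (-(‖x‖^2))^i) • (1:A) := by
      intro i
      rw [xv_pow_even, smul_smul]
    simp only [h1]
    rw [← Finset.sum_smul]
  rcases Nat.eq_zero_or_pos m with hm | hm
  · -- trivial case `m = 0`
    intro x
    have hx0 : xv F x = 0 := by
      have hxz : x = 0 := by
        subst hm
        exact Subsingleton.elim x 0
      rw [hxz, xv, _root_.map_zero, _root_.map_zero]
    rw [hpc x, hx0, smul_zero, zero_mul, smul_zero]
  · -- main case
    have hMf := (CG_formulas F D hM t).2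
    have hNf := (CG_formulas F D hN t).1
    have hK' : mu D + 2*(((k+1):ℕ):ℝ) = K + 2 := by
      rw [hKdef]; push_cast; ring
    rw [hK'] at hNf
    obtain ⟨x₁, hx₁R, hx₁0, hMx₁⟩ :=
      exists_good_point D hm hM.1.continuous hM.2.1 hM0
    obtain ⟨x₂, hx₂R, hx₂0, hNx₂⟩ :=
      exists_good_point D hm hN.1.continuous hN.2.1 hN0
    -- pc agrees with oddP K α t
    have hq : pc - oddP K α t = 0 := by
      apply poly_vanish (x₁ := x₁) _ hx₁0
      intro cc hcc
      set y : V m := cc • x₁ with hy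
      have hyR : y ∈ Reg D := smul_mem_Reg D hcc hx₁R
      have hMy : M y ≠ 0 := by
        rw [hy, hM.2.1 cc x₁]
        intro hcon
        exact pow_ne_zero k hcc (smul_cancel hcon hMx₁)
      have hyne : ‖y‖ ≠ 0 := by
        simp only [hy, norm_smul, Real.norm_eq_abs]
        exact mul_ne_zero (abs_ne_zero.2 hcc) (by simpa using hx₁0)
      have hw : xv F y * M y ≠ 0 := by
        intro hcon
        have h2 : xv F y * (xv F y * M y) = (-(‖y‖^2) : ℝ) • M y := by
          rw [← mul_assoc, xv_sq, smul_mul_assoc, one_mul]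
        rw [hcon, mul_zero] at h2
        have h3 : (-(‖y‖^2) : ℝ) = 0 := smul_cancel h2.symm hMy
        exact hyne (by nlinarith [sq_nonneg ‖y‖])
      have heq : (pc.eval (‖y‖^2) - (oddP K α t).eval (‖y‖^2)) • (xv F y * M y) = 0 := by
        have e1 : CG F D α (2*t+1) M y = c y * M y := hc y hyR
        have e2 : CG F D α (2*t+1) M y
            = (oddP K α t).eval (‖y‖^2) • (xv F y * M y) := hMf α y hyR
        rw [hpc y, smul_mul_assoc] at e1
        rw [sub_smul, ← e1, ← e2, sub_self]
      have h0 := smul_cancel heq hw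
      rw [eval_sub]
      exact h0
    have hq' : pc' - evenP (K+2) α t = 0 := by
      apply poly_vanish (x₁ := x₂) _ hx₂0
      intro cc hcc
      set y : V m := cc • x₂ with hy
      have hyR : y ∈ Reg D := smul_mem_Reg D hcc hx₂R
      have hNy : N y ≠ 0 := by
        rw [hy, hN.2.1 cc x₂]
        intro hcon
        exact pow_ne_zero (k+1) hcc (smul_cancel hcon hNx₂)
      have heq : (pc'.eval (‖y‖^2) - (evenP (K+2) α t).eval (‖y‖^2)) • N y = 0 := by
        have e1 : CG F D α (2*t) N y = c' y * N y := hc' y hyR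
        have e2 : CG F D α (2*t) N y
            = (evenP (K+2) α t).eval (‖y‖^2) • N y := hNf α y hyR
        rw [hpc' y, smul_mul_assoc, one_mul] at e1
        rw [sub_smul, ← e1, ← e2, sub_self]
      have h0 := smul_cancel heq hNy
      rw [eval_sub]
      exact h0
    have hpc_eq : pc = oddP K α t := by
      rw [← sub_eq_zero]; exact hq
    have hpc'_eq : pc' = evenP (K+2) α t := by
      rw [← sub_eq_zero]; exact hq'
    intro x
    rw [hpc x, hpc' x, hpc_eq, hpc'_eq, oddP_eq K t α]
    rw [eval_mul, eval_C]
    rw [mul_smul_comm, mul_one, smul_smul]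


end CGDunkl
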